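/- The following functions satisfy φ‴(ξ) + φ(ξ)·φ″(ξ) + ((2φ(ξ)² + 3φ′(ξ) − 1)/9)·φ′(ξ) = 0 on every interval where they are defined: (i) φ(ξ) = −(3√2/2)·tan((√2/3)·ξ) on any interval where cos((√2/3)ξ) ≠ 0, (ii) φ(ξ) = (3√2/2)·cot((√2/3)·ξ) on any interval where sin((√2/3)ξ) ≠ 0, (iii) φ(ξ) = 9/(2ξ) + √2/2 and (iv) φ(ξ) = 9/(2ξ) − √2/2, both for ξ ≠ 0. -/

import Mathlib

section Aux

private lemma extremal_aux_tan_hasDeriv {a y : ℝ} (h : Real.cos (a * y) ≠ 0) :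
    HasDerivAt (fun s => Real.tan (a * s)) (a * (1 + Real.tan (a * y) ^ 2)) y := by
  have h0 := (Real.hasDerivAt_tan h).comp y ((hasDerivAt_id y).const_mul a)
  refine h0.congr_deriv ?_
  symm
  rw [← Real.inv_one_add_tan_sq h, one_div, inv_inv]
  ring

private lemma extremal_aux_cot_hasDeriv {a y : ℝ} (h : Real.sin (a * y) ≠ 0) :
    HasDerivAt (fun s => Real.cos (a * s) / Real.sin (a * s))
      (-a * (1 + (Real.cos (a * y) / Real.sin (a * y)) ^ 2)) y := by
  have hc := (Real.hasDerivAt_cos (a * y)).comp y ((hasDerivAt_id y).const_mul a)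
  have hs := (Real.hasDerivAt_sin (a * y)).comp y ((hasDerivAt_id y).const_mul a)
  have h0 := hc.div hs h
  refine h0.congr_deriv ?_
  symm
  simp only [Function.comp_apply]
  field_simp
  ring

end Aux

/-- The fully affine extremal (Euler–Lagrange) operator with parameter `ε`:
`φ‴ + φ·φ″ + ((2φ² + 3φ′ + ε)/9)·φ′`. -/
noncomputable def extremalOp (ε : ℝ) (φ : ℝ → ℝ) (ξ : ℝ) : ℝ :=
  iteratedDeriv 3 φ ξ + φ ξ * iteratedDeriv 2 φ ξ
    + ((2 * (φ ξ) ^ 2 + 3 * deriv φ ξ + ε) / 9) * deriv φ ξ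

private lemma extremal_of_derivs {U : Set ℝ} (hU : IsOpen U) {φ f1 f2 f3 : ℝ → ℝ}
    (h1 : ∀ y ∈ U, HasDerivAt φ (f1 y) y)
    (h2 : ∀ y ∈ U, HasDerivAt f1 (f2 y) y)
    (h3 : ∀ y ∈ U, HasDerivAt f2 (f3 y) y)
    {x : ℝ} (hx : x ∈ U)
    (key : f3 x + φ x * f2 x + ((2 * (φ x) ^ 2 + 3 * f1 x + (-1 : ℝ)) / 9) * f1 x = 0) :
    extremalOp (-1) φ x = 0 := by
  have e1 : ∀ y ∈ U, deriv φ y = f1 y := fun y hy => (h1 y hy).deriv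
  have e2 : ∀ y ∈ U, iteratedDeriv 2 φ y = f2 y := by
    intro y hy
    have hev : deriv φ =ᶠ[nhds y] f1 := by
      filter_upwards [hU.mem_nhds hy] with z hz using e1 z hz
    rw [iteratedDeriv_succ, iteratedDeriv_one, hev.deriv_eq, (h2 y hy).deriv]
  have e3 : iteratedDeriv 3 φ x = f3 x := by
    have hev : iteratedDeriv 2 φ =ᶠ[nhds x] f2 := by
      filter_upwards [hU.mem_nhds hx] with z hz using e2 z hz
    rw [iteratedDeriv_succ, hev.deriv_eq, (h3 x hx).deriv]
  unfold extremalOp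
  rw [e3, e2 x hx, e1 x hx]
  exact key

private lemma extremal_rational_case (c : ℝ) (hc : c ^ 2 = 1 / 2) : ∀ ξ : ℝ, ξ ≠ 0 →
    extremalOp (-1) (fun s => 9 / (2 * s) + c) ξ = 0 := by
  intro ξ hξ
  refine extremal_of_derivs (U := {x : ℝ | x ≠ 0}) isOpen_ne
    (f1 := fun y => -9 / (2 * y ^ 2)) (f2 := fun y => 9 / y ^ 3)
    (f3 := fun y => -27 / y ^ 4) ?_ ?_ ?_ hξ ?_
  · intro y hy
    have hy' : y ≠ 0 := hy
    have h := ((hasDerivAt_const y (9 : ℝ)).div ((hasDerivAt_id y).const_mul 2)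
      (by simpa using hy')).add_const c
    refine h.congr_deriv ?_
    symm
    simp only [id]
    field_simp
    ring
  · intro y hy
    have hy' : y ≠ 0 := hy
    have h := (hasDerivAt_const y (-9 : ℝ)).div ((hasDerivAt_pow 2 y).const_mul 2)
      (by simp [pow_ne_zero, hy'])
    refine h.congr_deriv ?_
    symm
    field_simp
    ring
  · intro y hy
    have hy' : y ≠ 0 := hy
    have h := (hasDerivAt_const y (9 : ℝ)).div (hasDerivAt_pow 3 y) (pow_ne_zero _ hy')
    refine h.congr_deriv ?_
    symm
    field_simp
    ring
  · show -27 / ξ ^ 4 + (9 / (2 * ξ) + c) * (9 / ξ ^ 3)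
      + ((2 * (9 / (2 * ξ) + c) ^ 2 + 3 * (-9 / (2 * ξ ^ 2)) + (-1 : ℝ)) / 9)
        * (-9 / (2 * ξ ^ 2)) = 0
    field_simp
    linear_combination (-4 * ξ ^ 2) * hc

/-- The curves with fully affine curvature `−(3√2/2)·tan((√2/3)ξ)`,
`(3√2/2)·cot((√2/3)ξ)`, `9/(2ξ) + √2/2`, `9/(2ξ) − √2/2` are fully affine
extremal (case `ε = −1`), on the sets where they are defined. -/
theorem tan_cot_rational_extremal :
    (∀ ξ : ℝ, Real.cos (Real.sqrt 2 / 3 * ξ) ≠ 0 →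
      extremalOp (-1) (fun s => -(3 * Real.sqrt 2 / 2) * Real.tan (Real.sqrt 2 / 3 * s)) ξ = 0) ∧
    (∀ ξ : ℝ, Real.sin (Real.sqrt 2 / 3 * ξ) ≠ 0 →
      extremalOp (-1) (fun s => 3 * Real.sqrt 2 / 2 *
        (Real.cos (Real.sqrt 2 / 3 * s) / Real.sin (Real.sqrt 2 / 3 * s))) ξ = 0) ∧
    (∀ ξ : ℝ, ξ ≠ 0 →
      extremalOp (-1) (fun s => 9 / (2 * s) + Real.sqrt 2 / 2) ξ = 0) ∧
    (∀ ξ : ℝ, ξ ≠ 0 →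
      extremalOp (-1) (fun s => 9 / (2 * s) - Real.sqrt 2 / 2) ξ = 0) := by
  have hr : Real.sqrt 2 ^ 2 = 2 := Real.sq_sqrt (by norm_num)
  set a : ℝ := Real.sqrt 2 / 3 with ha
  refine ⟨?_, ?_, ?_, ?_⟩
  · -- tan case
    intro ξ hξ
    have hU : IsOpen {x : ℝ | Real.cos (a * x) ≠ 0} :=
      isOpen_ne.preimage (Real.continuous_cos.comp (continuous_const.mul continuous_id))
    refine extremal_of_derivs hU
      (f1 := fun y => -(1 + Real.tan (a * y) ^ 2))
      (f2 := fun y => -2 * a * (Real.tan (a * y) + Real.tan (a * y) ^ 3))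
      (f3 := fun y => -2 * a ^ 2 * (1 + Real.tan (a * y) ^ 2) * (1 + 3 * Real.tan (a * y) ^ 2))
      ?_ ?_ ?_ hξ ?_
    · intro y hy
      have h := (extremal_aux_tan_hasDeriv hy).const_mul (-(3 * Real.sqrt 2 / 2))
      refine h.congr_deriv ?_
      symm
      rw [ha]
      linear_combination ((1 + Real.tan (a * y) ^ 2) / 2) * hr
    · intro y hy
      have h := (((extremal_aux_tan_hasDeriv hy).pow 2).const_add 1).neg
      refine h.congr_deriv ?_
      symm
      push_cast
      ring
    · intro y hy
      have h := ((extremal_aux_tan_hasDeriv hy).add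
        ((extremal_aux_tan_hasDeriv hy).pow 3)).const_mul (-2 * a)
      refine h.congr_deriv ?_
      symm
      push_cast
      ring
    · set t := Real.tan (a * ξ)
      show -2 * a ^ 2 * (1 + t ^ 2) * (1 + 3 * t ^ 2)
        + (-(3 * Real.sqrt 2 / 2) * t) * (-2 * a * (t + t ^ 3))
        + ((2 * (-(3 * Real.sqrt 2 / 2) * t) ^ 2 + 3 * (-(1 + t ^ 2)) + (-1 : ℝ)) / 9)
          * (-(1 + t ^ 2)) = 0
      rw [ha]
      linear_combination (-(1 + t ^ 2) * (t ^ 2 / 6 + 2 / 9)) * hr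
  · -- cot case
    intro ξ hξ
    have hU : IsOpen {x : ℝ | Real.sin (a * x) ≠ 0} :=
      isOpen_ne.preimage (Real.continuous_sin.comp (continuous_const.mul continuous_id))
    refine extremal_of_derivs hU
      (f1 := fun y => -(1 + (Real.cos (a * y) / Real.sin (a * y)) ^ 2))
      (f2 := fun y => 2 * a * ((Real.cos (a * y) / Real.sin (a * y))
        + (Real.cos (a * y) / Real.sin (a * y)) ^ 3))
      (f3 := fun y => -2 * a ^ 2 * (1 + (Real.cos (a * y) / Real.sin (a * y)) ^ 2)
        * (1 + 3 * (Real.cos (a * y) / Real.sin (a * y)) ^ 2))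
      ?_ ?_ ?_ hξ ?_
    · intro y hy
      have h := (extremal_aux_cot_hasDeriv hy).const_mul (3 * Real.sqrt 2 / 2)
      refine h.congr_deriv ?_
      symm
      rw [ha]
      linear_combination ((1 + (Real.cos (a * y) / Real.sin (a * y)) ^ 2) / 2) * hr
    · intro y hy
      have h := (((extremal_aux_cot_hasDeriv hy).pow 2).const_add 1).neg
      refine h.congr_deriv ?_
      symm
      push_cast
      ring
    · intro y hy
      have h := ((extremal_aux_cot_hasDeriv hy).add
        ((extremal_aux_cot_hasDeriv hy).pow 3)).const_mul (2 * a)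
      refine h.congr_deriv ?_
      symm
      push_cast
      ring
    · set t := Real.cos (a * ξ) / Real.sin (a * ξ)
      show -2 * a ^ 2 * (1 + t ^ 2) * (1 + 3 * t ^ 2)
        + (3 * Real.sqrt 2 / 2 * t) * (2 * a * (t + t ^ 3))
        + ((2 * (3 * Real.sqrt 2 / 2 * t) ^ 2 + 3 * (-(1 + t ^ 2)) + (-1 : ℝ)) / 9)
          * (-(1 + t ^ 2)) = 0
      rw [ha]
      linear_combination (-(1 + t ^ 2) * (t ^ 2 / 6 + 2 / 9)) * hr
  · -- rational + case
    exact extremal_rational_case (Real.sqrt 2 / 2) (by rw [div_pow, hr]; norm_num)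
  · -- rational − case
    intro ξ hξ
    have h := extremal_rational_case (-(Real.sqrt 2 / 2))
      (by rw [neg_pow, div_pow, hr]; norm_num) ξ hξ
    simpa [sub_eq_add_neg] using h
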